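/- Fix a set A ⊆ {0,1,...,n−1} with |A| = αn for some α ∈ (0,1). Let w₁, ..., w_n be i.i.d. non-negative integer-valued random variables. Then P({i + wᵢ mod n : 1 ≤ i ≤ n} ⊆ A) ≤ α^n. -/

import Mathlib

open MeasureTheory ProbabilityTheory

/-- For A ⊆ {0,...,n-1} with |A| = αn and i.i.d. nonnegative integer wᵢ,
P({i + wᵢ mod n} ⊆ A) ≤ α^n. -/
theorem stmt7 {Ω : Type*} [MeasureSpace Ω] [IsProbabilityMeasure (ℙ : Measure Ω)]
    (n : ℕ) (hn : 0 < n) (w : Fin n → Ω → ℕ)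
    (hmeas : ∀ i, Measurable (w i))
    (hindep : iIndepFun w ℙ)
    (hident : ∀ i j, Measure.map (w i) ℙ = Measure.map (w j) ℙ)
    (A : Finset ℕ) (hA : A ⊆ Finset.range n)
    (α : ℝ) (hα : α ∈ Set.Ioo (0:ℝ) 1) (hcard : (A.card : ℝ) = α * n) :
    (ℙ {ω | ∀ i : Fin n, ((i : ℕ) + 1 + w i ω) % n ∈ A}).toReal ≤ α ^ n := by
  obtain ⟨hα0, hα1⟩ := hα
  set μ : Measure ℕ := Measure.map (w ⟨0, hn⟩) ℙ with hμdef
  have hμprob : IsProbabilityMeasure μ := Measure.isProbabilityMeasure_map (hmeas _).aemeasurable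
  set S : Fin n → Set ℕ := fun i => {k | ((i : ℕ) + 1 + k) % n ∈ A} with hSdef
  have hEi : ∀ i : Fin n, ℙ (w i ⁻¹' S i) = μ (S i) := by
    intro i
    rw [hμdef, hident ⟨0, hn⟩ i, Measure.map_apply (hmeas i) (MeasurableSet.of_discrete)]
  -- the event is the intersection
  have hev : {ω | ∀ i : Fin n, ((i : ℕ) + 1 + w i ω) % n ∈ A} = ⋂ i, w i ⁻¹' S i := by
    ext ω; simp [hSdef, Set.mem_iInter]
  -- independence gives the product formula
  have hprod : ℙ (⋂ i, w i ⁻¹' S i) = ∏ i, ℙ (w i ⁻¹' S i) :=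
    hindep.meas_iInter (fun i => ⟨S i, MeasurableSet.of_discrete, rfl⟩)
  -- key sum identity
  have key : ∑ i : Fin n, μ (S i) = (A.card : ENNReal) := by
    have h1 : ∀ i : Fin n, μ (S i) = ∑ a ∈ A, μ {k | ((i : ℕ) + 1 + k) % n = a} := by
      intro i
      have hU : S i = ⋃ a ∈ A, {k | ((i : ℕ) + 1 + k) % n = a} := by
        ext k; simp [hSdef]
      rw [hU, measure_biUnion_finset ?_ (fun a _ => MeasurableSet.of_discrete)]
      intro a _ b _ hab
      simp only [Function.onFun, Set.disjoint_left, Set.mem_setOf_eq]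
      intro k hk1 hk2
      exact hab (hk1.symm.trans hk2)
    have h2 : ∀ a ∈ A, ∑ i : Fin n, μ {k | ((i : ℕ) + 1 + k) % n = a} = 1 := by
      intro a ha
      have han : a < n := Finset.mem_range.mp (hA ha)
      have hdisj : ((Finset.univ : Finset (Fin n)) : Set (Fin n)).PairwiseDisjoint
          (fun i : Fin n => {k | ((i : ℕ) + 1 + k) % n = a}) := by
        intro i _ j _ hij
        simp only [Function.onFun, Set.disjoint_left, Set.mem_setOf_eq]
        intro k hk1 hk2
        apply hij
        have hmod : (i : ℕ) + (1 + k) ≡ (j : ℕ) + (1 + k) [MOD n] := by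
          show ((i : ℕ) + (1 + k)) % n = ((j : ℕ) + (1 + k)) % n
          rw [← Nat.add_assoc, ← Nat.add_assoc, hk1, hk2]
        have := (Nat.ModEq.add_right_cancel' (1 + k) hmod)
        have hiℕ : (i : ℕ) = (j : ℕ) := by
          have := this
          unfold Nat.ModEq at this
          rwa [Nat.mod_eq_of_lt i.isLt, Nat.mod_eq_of_lt j.isLt] at this
        exact Fin.ext hiℕ
      have huniv : (⋃ i ∈ (Finset.univ : Finset (Fin n)),
          {k | ((i : ℕ) + 1 + k) % n = a}) = Set.univ := by
        ext k
        simp only [Set.mem_iUnion, Set.mem_univ, iff_true, Finset.mem_univ, Set.mem_setOf_eq,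
          exists_prop, true_and]
        set r := (1 + k) % n with hr
        have hrn : r < n := Nat.mod_lt _ hn
        refine ⟨⟨(a + (n - r)) % n, Nat.mod_lt _ hn⟩, ?_⟩
        show ((a + (n - r)) % n + 1 + k) % n = a
        have h1 : (a + (n - r)) % n + 1 + k = (a + (n - r)) % n + (1 + k) := by ring
        have h2 : (a + (n - r)) % n + (1 + k) ≡ (a + (n - r)) + r [MOD n] :=
          (Nat.mod_modEq _ n).add (Nat.mod_modEq (1 + k) n).symm
        have h3 : a + (n - r) + r = a + n := by omega
        calc ((a + (n - r)) % n + 1 + k) % n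
            = ((a + (n - r)) + r) % n := by rw [h1]; exact h2
          _ = (a + n) % n := by rw [h3]
          _ = a % n := Nat.add_mod_right a n
          _ = a := Nat.mod_eq_of_lt han
      calc ∑ i : Fin n, μ {k | ((i : ℕ) + 1 + k) % n = a}
          = μ (⋃ i ∈ (Finset.univ : Finset (Fin n)), {k | ((i : ℕ) + 1 + k) % n = a}) :=
            (measure_biUnion_finset hdisj (fun i _ => MeasurableSet.of_discrete)).symm
        _ = μ Set.univ := by rw [huniv]
        _ = 1 := measure_univ
    calc ∑ i : Fin n, μ (S i)
        = ∑ i : Fin n, ∑ a ∈ A, μ {k | ((i : ℕ) + 1 + k) % n = a} :=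
          Finset.sum_congr rfl fun i _ => h1 i
      _ = ∑ a ∈ A, ∑ i : Fin n, μ {k | ((i : ℕ) + 1 + k) % n = a} := Finset.sum_comm
      _ = ∑ a ∈ A, 1 := Finset.sum_congr rfl h2
      _ = (A.card : ENNReal) := by simp
  -- pass to real numbers
  set p : Fin n → ℝ := fun i => (ℙ (w i ⁻¹' S i)).toReal with hpdef
  have hp0 : ∀ i, 0 ≤ p i := fun i => ENNReal.toReal_nonneg
  have hsum : ∑ i : Fin n, p i = α * n := by
    have : (∑ i : Fin n, μ (S i)).toReal = ∑ i : Fin n, (μ (S i)).toReal :=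
      ENNReal.toReal_sum (fun i _ => measure_ne_top _ _)
    have h4 : ∑ i : Fin n, (μ (S i)).toReal = (A.card : ℝ) := by
      rw [← this, key]; simp
    calc ∑ i : Fin n, p i = ∑ i : Fin n, (μ (S i)).toReal := by
          refine Finset.sum_congr rfl fun i _ => ?_
          simp only [hpdef]
          rw [hEi i]
      _ = (A.card : ℝ) := h4
      _ = α * n := hcard
  -- AM-GM
  have hAM : ∏ i : Fin n, p i ^ ((n : ℝ)⁻¹) ≤ α := by
    have hw : ∑ _i : Fin n, (n : ℝ)⁻¹ = 1 := by
      rw [Finset.sum_const, Finset.card_univ, Fintype.card_fin, nsmul_eq_mul]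
      field_simp
    have := Real.geom_mean_le_arith_mean_weighted Finset.univ (fun _ => (n : ℝ)⁻¹) p
      (fun _ _ => by positivity) hw (fun i _ => hp0 i)
    calc ∏ i : Fin n, p i ^ ((n : ℝ)⁻¹) ≤ ∑ i : Fin n, (n : ℝ)⁻¹ * p i := this
      _ = (n : ℝ)⁻¹ * ∑ i : Fin n, p i := by rw [Finset.mul_sum]
      _ = (n : ℝ)⁻¹ * (α * n) := by rw [hsum]
      _ = α := by field_simp
  have hfinal : ∏ i : Fin n, p i ≤ α ^ n := by
    calc ∏ i : Fin n, p i
        = ∏ i : Fin n, (p i ^ ((n : ℝ)⁻¹)) ^ n := by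
          refine Finset.prod_congr rfl fun i _ => ?_
          rw [← Real.rpow_natCast (p i ^ ((n : ℝ)⁻¹)) n, ← Real.rpow_mul (hp0 i),
            inv_mul_cancel₀ (by exact_mod_cast hn.ne'), Real.rpow_one]
      _ = (∏ i : Fin n, p i ^ ((n : ℝ)⁻¹)) ^ n := by rw [Finset.prod_pow]
      _ ≤ α ^ n := pow_le_pow_left₀
          (Finset.prod_nonneg fun i _ => Real.rpow_nonneg (hp0 i) _) hAM n
  calc (ℙ {ω | ∀ i : Fin n, ((i : ℕ) + 1 + w i ω) % n ∈ A}).toReal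
      = (∏ i : Fin n, ℙ (w i ⁻¹' S i)).toReal := by rw [hev, hprod]
    _ = ∏ i : Fin n, p i := ENNReal.toReal_prod _ _
    _ ≤ α ^ n := hfinal
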